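/- arXiv:2509.04234 — 7 statements merged into one kernel-verified Lean document; each statement's English description precedes it below -/
import Mathlib

section
/- Let m, n, l be natural numbers with l ≥ 1, set N = m + n − l, and let 1 ≤ d ≤ n. Suppose γ is an N-excluded Brauer representation triple at depth d for the pair (m,n) which is an ancestor at depth d of some Brauer representation triple g for the pair (m,n) with ht(g) ≤ N. Then the excess Δ = ht(γ) − N satisfies Δ ≤ min(d, l−d). -/
/-- A Brauer representation triple for the pair `(m, n)`: a natural number
`k ≤ min m n`, a partition `γ₊` of `m - k` and a partition `γ₋` of `n - k`. -/
structure BRT (m n : ℕ) where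
  k : ℕ
  k_le : k ≤ min m n
  gp : Nat.Partition (m - k)
  gm : Nat.Partition (n - k)

namespace BRT

/-- The height of a Brauer representation triple: the total number of parts of the
two partitions (the sum of the first-column lengths of the Young diagrams). -/
def ht {m n : ℕ} (γ : BRT m n) : ℕ :=
  Multiset.card γ.gp.parts + Multiset.card γ.gm.parts

end BRT

/-- `AddBox lam mu` : the multiset of parts `mu` is obtained from the multiset of parts
`lam` by adding one box to the Young diagram (either as a new part equal to `1`, or by
increasing one existing part by `1`). -/
def AddBox (lam mu : Multiset ℕ) : Prop :=
  mu = 1 ::ₘ lam ∨ ∃ a ∈ lam, mu = (a + 1) ::ₘ lam.erase a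

/-- `γ'` (a triple at depth `d+1`) is a parent of `γ` (a triple at depth `d`):
either (a) `k' = k`, `γ₊' = γ₊` and `γ₋` is obtained from `γ₋'` by adding one box, or
(b) `k' = k - 1`, `γ₋' = γ₋` and `γ₊'` is obtained from `γ₊` by adding one box. -/
def IsParent {m n₁ n₂ : ℕ} (γ : BRT m n₁) (γ' : BRT m n₂) : Prop :=
  (γ'.k = γ.k ∧ γ'.gp.parts = γ.gp.parts ∧ AddBox γ'.gm.parts γ.gm.parts)
  ∨ (γ'.k = γ.k - 1 ∧ γ'.gm.parts = γ.gm.parts ∧ AddBox γ.gp.parts γ'.gp.parts)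

/-- `IsAncestor m n d d' γ γ'` : the triple `γ'` at depth `d'` for the pair `(m,n)` is an
ancestor of the triple `γ` at depth `d`, i.e. `γ'` is reachable from `γ` by iterating
the parent relation `d' - d` times (one step for each unit increase of depth). -/
inductive IsAncestor (m n : ℕ) : ∀ (d d' : ℕ), BRT m (n - d) → BRT m (n - d') → Prop
  | step {d : ℕ} (γ : BRT m (n - d)) (γ' : BRT m (n - (d + 1))) :
      IsParent γ γ' → IsAncestor m n d (d + 1) γ γ'
  | tail {d d' : ℕ} {γ : BRT m (n - d)} {γ' : BRT m (n - d')} (γ'' : BRT m (n - (d' + 1))) :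
      IsAncestor m n d d' γ γ' → IsParent γ' γ'' → IsAncestor m n d (d' + 1) γ γ''

/-- `Zuniv s` : the number of quadruples `(Δ, k, λ₁, λ₂)` with `Δ ≥ 1`, `k ≥ 0` natural
numbers and `λ₁, λ₂` partitions (of arbitrary natural numbers) such that
`Δ + 2k + |λ₁| + |λ₂| = s`. -/
noncomputable def Zuniv (s : ℕ) : ℕ :=
  Nat.card {q : (ℕ × ℕ) × (Σ a : ℕ, Nat.Partition a) × (Σ a : ℕ, Nat.Partition a) //
    1 ≤ q.1.1 ∧ q.1.1 + 2 * q.1.2 + q.2.1.1 + q.2.2.1 = s}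

/-- `p a` : the number of partitions of `a` (with `p 0 = 1`). -/
def p (a : ℕ) : ℕ := Fintype.card (Nat.Partition a)

lemma addBox_card {lam mu : Multiset ℕ} (h : AddBox lam mu) :
    Multiset.card lam ≤ Multiset.card mu ∧ Multiset.card mu ≤ Multiset.card lam + 1 := by
  rcases h with h | ⟨a, ha, h⟩ <;> subst h
  · simp
  · have := Multiset.card_pos_iff_exists_mem.2 ⟨a, ha⟩
    simp [Multiset.card_erase_of_mem ha, Multiset.card_cons]
    omega

lemma parent_ht {m n₁ n₂ : ℕ} {γ : BRT m n₁} {γ' : BRT m n₂} (h : IsParent γ γ') :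
    γ'.ht ≤ γ.ht + 1 := by
  rcases h with ⟨_, h1, h2⟩ | ⟨_, h1, h2⟩ <;> have := addBox_card h2 <;>
    unfold BRT.ht <;> rw [h1] <;> omega

lemma ancestor_ht {m n d d' : ℕ} {γ : BRT m (n - d)} {γ' : BRT m (n - d')}
    (h : IsAncestor m n d d' γ γ') : γ'.ht + d ≤ γ.ht + d' := by
  induction h with
  | step γ γ' hp => have := parent_ht hp; omega
  | tail γ'' _ hp ih => have := parent_ht hp; omega

lemma partition_card {a : ℕ} (P : Nat.Partition a) : Multiset.card P.parts ≤ a := by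
  have h : ∀ x ∈ P.parts, 1 ≤ x := fun x hx => P.parts_pos hx
  calc Multiset.card P.parts = (P.parts.map (fun _ => 1)).sum := by simp
  _ ≤ P.parts.sum := Multiset.sum_map_le_sum _ h
  _ = a := P.parts_sum

lemma brt_ht_le {m n : ℕ} (γ : BRT m n) : γ.ht ≤ m + n := by
  have h1 := partition_card γ.gp
  have h2 := partition_card γ.gm
  have := γ.k_le
  unfold BRT.ht; omega

/-- For `l ≥ 1`, `N = m + n - l` and `1 ≤ d ≤ n`, if `γ` is an `N`-excluded Brauer
representation triple at depth `d` for the pair `(m,n)` which is an ancestor at depth `d`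
of some triple `g` for the pair `(m,n)` with `ht(g) ≤ N`, then the excess
`Δ = ht(γ) - N` satisfies `Δ ≤ min d (l - d)`. -/
theorem stmt3 (m n l d : ℕ) (hl : 1 ≤ l) (hd1 : 1 ≤ d) (hd2 : d ≤ n)
    (γ : BRT m (n - d)) (hred : m + n - l < γ.ht)
    (g : BRT m (n - 0)) (hg : g.ht ≤ m + n - l)
    (hanc : IsAncestor m n 0 d g γ) :
    γ.ht - (m + n - l) ≤ min d (l - d) := by
  have h1 := ancestor_ht hanc
  have h2 := brt_ht_le γ
  have hg' := hg
  have hn : n - d ≤ n := Nat.sub_le n d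
  omega
end

section
/- (Degree-stability of red-node counts.) Let l ≥ 2, let 1 ≤ d ≤ l−1, let Δ ≥ 1, and let m, n, m', n' be natural numbers all ≥ 2l − 3. Then the number of Brauer representation triples for the pair (m, n−d) with height equal to (m + n − l) + Δ is equal to the number of Brauer representation triples for the pair (m', n'−d) with height equal to (m' + n' − l) + Δ. -/
def stripM (P : Multiset ℕ) : Multiset ℕ := (P.map (· - 1)).filter (0 < ·)

def fatM (μ : Multiset ℕ) (r : ℕ) : Multiset ℕ := μ.map (· + 1) + Multiset.replicate r 1

lemma stripM_pos {P : Multiset ℕ} {x : ℕ} (hx : x ∈ stripM P) : 0 < x :=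
  Multiset.of_mem_filter hx

lemma stripM_cons (a : ℕ) (P : Multiset ℕ) :
    stripM (a ::ₘ P) = if 0 < a - 1 then (a - 1) ::ₘ stripM P else stripM P := by
  simp only [stripM, Multiset.map_cons, Multiset.filter_cons]
  split <;> simp

lemma stripM_sum (P : Multiset ℕ) (hP : ∀ x ∈ P, 0 < x) :
    (stripM P).sum + Multiset.card P = P.sum := by
  induction P using Multiset.induction_on with
  | empty => simp [stripM]
  | cons a P ih =>
    have ha : 0 < a := hP a (Multiset.mem_cons_self a P)
    have := ih (fun x hx => hP x (Multiset.mem_cons_of_mem hx))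
    rw [stripM_cons]
    split <;> simp_all <;> omega

lemma stripM_card (P : Multiset ℕ) (hP : ∀ x ∈ P, 0 < x) :
    Multiset.card (stripM P) + P.count 1 = Multiset.card P := by
  induction P using Multiset.induction_on with
  | empty => simp [stripM]
  | cons a P ih =>
    have ha : 0 < a := hP a (Multiset.mem_cons_self a P)
    have := ih (fun x hx => hP x (Multiset.mem_cons_of_mem hx))
    have hc : P.count 1 ≤ Multiset.card P := Multiset.count_le_card 1 P
    rw [stripM_cons, Multiset.count_cons]
    by_cases h1 : a = 1
    · subst h1
      rw [if_neg (by omega), if_pos rfl]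
      simp only [Multiset.card_cons]
      omega
    · rw [if_pos (by omega), if_neg (by omega)]
      simp only [Multiset.card_cons, Multiset.card_cons]
      omega

lemma count_one_le (P : Multiset ℕ) : P.count 1 ≤ Multiset.card P :=
  Multiset.count_le_card 1 P

lemma card_le_sum (P : Multiset ℕ) (hP : ∀ x ∈ P, 0 < x) :
    Multiset.card P ≤ P.sum := by
  induction P using Multiset.induction_on with
  | empty => simp
  | cons a P ih =>
    have ha : 0 < a := hP a (Multiset.mem_cons_self a P)
    have := ih (fun x hx => hP x (Multiset.mem_cons_of_mem hx))
    simp only [Multiset.card_cons, Multiset.sum_cons]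
    omega

lemma fatM_pos {μ : Multiset ℕ} {r : ℕ} (hμ : ∀ x ∈ μ, 0 < x) :
    ∀ x ∈ fatM μ r, 0 < x := by
  intro x hx
  rw [fatM, Multiset.mem_add] at hx
  rcases hx with hx | hx
  · obtain ⟨y, _, rfl⟩ := Multiset.mem_map.mp hx; omega
  · rw [Multiset.eq_of_mem_replicate hx]; norm_num

lemma fatM_sum (μ : Multiset ℕ) (r : ℕ) :
    (fatM μ r).sum = μ.sum + Multiset.card μ + r := by
  simp [fatM, Multiset.sum_map_add]

lemma fatM_card (μ : Multiset ℕ) (r : ℕ) :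
    Multiset.card (fatM μ r) = Multiset.card μ + r := by
  simp [fatM]

lemma fatM_succ (μ : Multiset ℕ) (r : ℕ) : fatM μ (r + 1) = 1 ::ₘ fatM μ r := by
  simp [fatM, Multiset.replicate_succ, Multiset.add_cons]

lemma fatM_cons (a : ℕ) (μ : Multiset ℕ) (r : ℕ) :
    fatM (a ::ₘ μ) r = (a + 1) ::ₘ fatM μ r := by
  simp [fatM, Multiset.cons_add]

lemma strip_fat (μ : Multiset ℕ) (r : ℕ) (hμ : ∀ x ∈ μ, 0 < x) :
    stripM (fatM μ r) = μ := by
  rw [stripM, fatM, Multiset.map_add, Multiset.map_map, Multiset.map_replicate]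
  have h1 : Multiset.map ((· - 1) ∘ (· + 1)) μ = μ := by
    rw [show ((· - 1) ∘ (· + 1) : ℕ → ℕ) = id from by funext x; simp, Multiset.map_id]
  rw [h1]
  rw [Multiset.filter_add]
  have h2 : Multiset.filter (0 < ·) μ = μ := Multiset.filter_eq_self.mpr hμ
  have h3 : Multiset.filter (0 < ·) (Multiset.replicate r 0) = 0 := by
    rw [Multiset.filter_eq_nil]
    intro a ha
    rw [Multiset.eq_of_mem_replicate ha]
    simp
  rw [h2, h3]; exact add_zero μ

lemma fat_strip (P : Multiset ℕ) (hP : ∀ x ∈ P, 0 < x) :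
    fatM (stripM P) (P.count 1) = P := by
  induction P using Multiset.induction_on with
  | empty => simp [stripM, fatM]
  | cons a P ih =>
    have ha : 0 < a := hP a (Multiset.mem_cons_self a P)
    have ih' := ih (fun x hx => hP x (Multiset.mem_cons_of_mem hx))
    rw [stripM_cons, Multiset.count_cons]
    by_cases h1 : a = 1
    · subst h1
      rw [if_neg (by omega), if_pos rfl, fatM_succ, ih']
    · have h2 : 0 < a - 1 := by omega
      rw [if_pos h2, if_neg (by omega : ¬ (1 = a)), fatM_cons,
        show a - 1 + 1 = a from by omega, Nat.add_zero, ih']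

lemma BRT.ext' {m n : ℕ} {γ γ' : BRT m n} (hk : γ.k = γ'.k)
    (hp : γ.gp.parts = γ'.gp.parts) (hm : γ.gm.parts = γ'.gm.parts) : γ = γ' := by
  obtain ⟨k, kle, gp, gm⟩ := γ
  obtain ⟨k', kle', gp', gm'⟩ := γ'
  dsimp at hk hp hm
  subst hk
  have h1 : gp = gp' := Nat.Partition.ext hp
  have h2 : gm = gm' := Nat.Partition.ext hm
  subst h1; subst h2; rfl

/-- Strip one box from each row: a partition of any `n` gives a point of `Σ a, Partition a`. -/
def toSig {n : ℕ} (P : Nat.Partition n) : Σ a : ℕ, Nat.Partition a :=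
  ⟨(stripM P.parts).sum, ⟨stripM P.parts, fun {_} hi => stripM_pos hi, rfl⟩⟩

lemma sig_ext {a b : ℕ} (P : Nat.Partition a) (Q : Nat.Partition b) (h : P.parts = Q.parts) :
    (⟨a, P⟩ : Σ n : ℕ, Nat.Partition n) = ⟨b, Q⟩ := by
  have hab : a = b := by rw [← P.parts_sum, ← Q.parts_sum, h]
  subst hab
  exact congrArg _ (Nat.Partition.ext h)

lemma toSig_eq {n t : ℕ} (P : Nat.Partition n) (L : Nat.Partition t)
    (h : stripM P.parts = L.parts) : toSig P = ⟨t, L⟩ :=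
  sig_ext _ _ h

/-- Pad: from a partition `L` of `t`, build a partition of `c` (when `c` is big enough)
by adding a box to each row of `L` and padding with rows of size 1. -/
def buildPart (c t : ℕ) (L : Nat.Partition t) (hc : t + Multiset.card L.parts ≤ c) :
    Nat.Partition c where
  parts := fatM L.parts (c - t - Multiset.card L.parts)
  parts_pos := fun {_} hi => fatM_pos (fun _ hx => L.parts_pos hx) _ hi
  parts_sum := by
    rw [fatM_sum, L.parts_sum]
    omega

lemma buildPart_card (c t : ℕ) (L : Nat.Partition t) (hc : t + Multiset.card L.parts ≤ c) :
    Multiset.card (buildPart c t L hc).parts = c - t := by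
  show Multiset.card (fatM _ _) = _
  rw [fatM_card]
  omega

def MidT (s : ℕ) :=
  {q : ℕ × (Σ a : ℕ, Nat.Partition a) × (Σ a : ℕ, Nat.Partition a) //
    2 * q.1 + q.2.1.1 + q.2.2.1 = s}

def keyEquiv (M N h s : ℕ) (hMN : h + s = M + N) (hM : 2 * s ≤ M) (hN : 2 * s ≤ N) :
    {γ : BRT M N // γ.ht = h} ≃ MidT s where
  toFun γ := ⟨(γ.1.k, toSig γ.1.gp, toSig γ.1.gm), by
    obtain ⟨⟨k, kle, gp, gm⟩, hht⟩ := γ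
    have e1 := stripM_sum gp.parts (fun _ hx => gp.parts_pos hx)
    have e2 := stripM_sum gm.parts (fun _ hx => gm.parts_pos hx)
    rw [gp.parts_sum] at e1
    rw [gm.parts_sum] at e2
    simp only [BRT.ht] at hht
    show 2 * k + (stripM gp.parts).sum + (stripM gm.parts).sum = s
    omega⟩
  invFun q :=
    ⟨⟨q.1.1, by have hq := q.2; omega,
      buildPart (M - q.1.1) q.1.2.1.1 q.1.2.1.2 (by
        have hq := q.2
        have hc := card_le_sum q.1.2.1.2.parts (fun _ hx => q.1.2.1.2.parts_pos hx)
        rw [q.1.2.1.2.parts_sum] at hc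
        omega),
      buildPart (N - q.1.1) q.1.2.2.1 q.1.2.2.2 (by
        have hq := q.2
        have hc := card_le_sum q.1.2.2.2.parts (fun _ hx => q.1.2.2.2.parts_pos hx)
        rw [q.1.2.2.2.parts_sum] at hc
        omega)⟩, by
      have hq := q.2
      simp only [BRT.ht]
      rw [buildPart_card, buildPart_card]
      omega⟩
  left_inv := by
    rintro ⟨⟨k, kle, gp, gm⟩, hht⟩
    apply Subtype.ext
    dsimp only
    refine BRT.ext' rfl ?_ ?_
    · show fatM (stripM gp.parts) _ = gp.parts
      dsimp only [toSig]
      have e1 := stripM_sum gp.parts (fun _ hx => gp.parts_pos hx)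
      have e2 := stripM_card gp.parts (fun _ hx => gp.parts_pos hx)
      have e3 := count_one_le gp.parts
      rw [gp.parts_sum] at e1
      have : M - k - (stripM gp.parts).sum - Multiset.card (stripM gp.parts)
          = gp.parts.count 1 := by omega
      rw [this]
      exact fat_strip _ (fun _ hx => gp.parts_pos hx)
    · show fatM (stripM gm.parts) _ = gm.parts
      dsimp only [toSig]
      have e1 := stripM_sum gm.parts (fun _ hx => gm.parts_pos hx)
      have e2 := stripM_card gm.parts (fun _ hx => gm.parts_pos hx)
      have e3 := count_one_le gm.parts
      rw [gm.parts_sum] at e1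
      have : N - k - (stripM gm.parts).sum - Multiset.card (stripM gm.parts)
          = gm.parts.count 1 := by omega
      rw [this]
      exact fat_strip _ (fun _ hx => gm.parts_pos hx)
  right_inv := by
    rintro ⟨⟨k, ⟨t₁, L₁⟩, ⟨t₂, L₂⟩⟩, hq⟩
    apply Subtype.ext
    exact congrArg₂ Prod.mk rfl (congrArg₂ Prod.mk
      (toSig_eq _ L₁ (strip_fat _ _ (fun _ hx => L₁.parts_pos hx)))
      (toSig_eq _ L₂ (strip_fat _ _ (fun _ hx => L₂.parts_pos hx))))

lemma key (M N h s : ℕ) (hMN : h + s = M + N) (hM : 2 * s ≤ M) (hN : 2 * s ≤ N) :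
    Nat.card {γ : BRT M N // γ.ht = h} = Nat.card (MidT s) :=
  Nat.card_congr (keyEquiv M N h s hMN hM hN)

lemma key0 (M N h : ℕ) (hlt : M + N < h) : Nat.card {γ : BRT M N // γ.ht = h} = 0 := by
  have : IsEmpty {γ : BRT M N // γ.ht = h} := by
    constructor
    rintro ⟨⟨k, kle, gp, gm⟩, hht⟩
    have h1 := card_le_sum gp.parts (fun _ hx => gp.parts_pos hx)
    have h2 := card_le_sum gm.parts (fun _ hx => gm.parts_pos hx)
    rw [gp.parts_sum] at h1
    rw [gm.parts_sum] at h2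
    simp only [BRT.ht] at hht
    omega
  exact Nat.card_of_isEmpty


/-- Degree-stability of red-node counts: for `l ≥ 2`, `1 ≤ d ≤ l - 1`, `Δ ≥ 1` and
`m, n, m', n'` all at least `2l - 3`, the number of Brauer representation triples for the
pair `(m, n - d)` of height `(m + n - l) + Δ` equals the number of triples for the pair
`(m', n' - d)` of height `(m' + n' - l) + Δ`. -/
theorem stmt4 (l d Δ m n m' n' : ℕ) (hl : 2 ≤ l) (hd1 : 1 ≤ d) (hd2 : d ≤ l - 1)
    (hΔ : 1 ≤ Δ) (hm : 2 * l - 3 ≤ m) (hn : 2 * l - 3 ≤ n)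
    (hm' : 2 * l - 3 ≤ m') (hn' : 2 * l - 3 ≤ n') :
    Nat.card {γ : BRT m (n - d) // γ.ht = (m + n - l) + Δ}
      = Nat.card {γ : BRT m' (n' - d) // γ.ht = (m' + n' - l) + Δ} := by
  by_cases hld : d + Δ ≤ l
  · rw [key m (n - d) _ (l - d - Δ) (by omega) (by omega) (by omega),
        key m' (n' - d) _ (l - d - Δ) (by omega) (by omega) (by omega)]
  · rw [key0 _ _ _ (by omega), key0 _ _ _ (by omega)]
end

section
/- Let l ≥ 2, d ≥ 1, Δ ≥ 1 be natural numbers and let m, n ≥ 2l − 3 with d ≤ n. Then the number of Brauer representation triples (k, γ₊, γ₋) for the pair (m, n−d) with ht = (m + n − l) + Δ equals Σ_{k=0}^{⌊(l−d−Δ)/2⌋} Σ_{a=0}^{l−d−Δ−2k} p(a)·p(l−d−Δ−2k−a); in particular this count is 0 when Δ > l − d. -/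
namespace Stmt5Aux

/-- Remove one box from each row of a Young diagram (drop rows that vanish). -/
def shrink (s : Multiset ℕ) : Multiset ℕ := (s.map (· - 1)).filter (0 < ·)

/-- Add one box to each row and pad with rows of length 1 up to total size `N`. -/
def grow (u : Multiset ℕ) (N : ℕ) : Multiset ℕ :=
  u.map (· + 1) + Multiset.replicate (N - (u.sum + Multiset.card u)) 1

lemma card_le_sum {s : Multiset ℕ} (h : ∀ i ∈ s, 0 < i) : Multiset.card s ≤ s.sum := by
  induction s using Multiset.induction with
  | empty => simp
  | cons a s ih =>
    simp only [Multiset.card_cons, Multiset.sum_cons]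
    have ha := h a (Multiset.mem_cons_self a s)
    have := ih (fun i hi => h i (Multiset.mem_cons_of_mem hi))
    omega

lemma sum_map_add_one (s : Multiset ℕ) : (s.map (· + 1)).sum = s.sum + Multiset.card s := by
  induction s using Multiset.induction with
  | empty => simp
  | cons a s ih => simp only [Multiset.map_cons, Multiset.sum_cons, Multiset.card_cons, ih]; omega

lemma sum_map_sub_one {s : Multiset ℕ} (h : ∀ i ∈ s, 0 < i) :
    (s.map (· - 1)).sum = s.sum - Multiset.card s := by
  induction s using Multiset.induction with
  | empty => simp
  | cons a s ih =>
    have ha := h a (Multiset.mem_cons_self a s)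
    have hs := card_le_sum (fun i hi => h i (Multiset.mem_cons_of_mem hi))
    have := ih (fun i hi => h i (Multiset.mem_cons_of_mem hi))
    simp only [Multiset.map_cons, Multiset.sum_cons, Multiset.card_cons, this]
    omega

lemma shrink_pos {s : Multiset ℕ} {i : ℕ} (hi : i ∈ shrink s) : 0 < i :=
  (Multiset.mem_filter.mp hi).2

lemma shrink_eq (s : Multiset ℕ) : shrink s = (s.filter (1 < ·)).map (· - 1) := by
  unfold shrink
  rw [Multiset.filter_map]
  congr 1
  apply Multiset.filter_congr
  intro x _
  show 0 < x - 1 ↔ 1 < x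
  omega

lemma shrink_sum {s : Multiset ℕ} (h : ∀ i ∈ s, 0 < i) :
    (shrink s).sum = s.sum - Multiset.card s := by
  have h2 : (shrink s).sum + ((s.map (· - 1)).filter (fun a => ¬ 0 < a)).sum
      = (s.map (· - 1)).sum := by
    rw [shrink, ← Multiset.sum_add, Multiset.filter_add_not]
  have h3 : ((s.map (· - 1)).filter (fun a => ¬ 0 < a)).sum = 0 := by
    apply Multiset.sum_eq_zero
    intro x hx
    have := (Multiset.mem_filter.mp hx).2
    omega
  rw [h3] at h2
  simpa [sum_map_sub_one h] using h2

lemma grow_pos {u : Multiset ℕ} {N i : ℕ} (hi : i ∈ grow u N) : 0 < i := by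
  rw [grow, Multiset.mem_add] at hi
  rcases hi with hi | hi
  · obtain ⟨x, _, rfl⟩ := Multiset.mem_map.mp hi
    omega
  · rw [Multiset.eq_of_mem_replicate hi]
    omega

lemma grow_sum {u : Multiset ℕ} {N : ℕ} (h : u.sum + Multiset.card u ≤ N) :
    (grow u N).sum = N := by
  rw [grow, Multiset.sum_add, sum_map_add_one, Multiset.sum_replicate, smul_eq_mul, mul_one]
  omega

lemma grow_card (u : Multiset ℕ) (N : ℕ) :
    Multiset.card (grow u N) = Multiset.card u + (N - (u.sum + Multiset.card u)) := by
  simp [grow]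

lemma shrink_grow (u : Multiset ℕ) (N : ℕ) (h : ∀ i ∈ u, 0 < i) : shrink (grow u N) = u := by
  unfold shrink grow
  rw [Multiset.map_add, Multiset.map_map, Multiset.filter_add]
  have h1 : u.map ((· - 1) ∘ (· + 1)) = u := by
    rw [show ((· - 1) ∘ (· + 1) : ℕ → ℕ) = id from funext fun x => by simp, Multiset.map_id]
  rw [h1, Multiset.map_replicate]
  have h2 : Multiset.filter (0 < ·) u = u := Multiset.filter_eq_self.mpr h
  rw [h2, Multiset.filter_eq_nil.mpr (fun a ha => by rw [Multiset.eq_of_mem_replicate ha]; omega), add_zero]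

lemma grow_shrink {s : Multiset ℕ} (h : ∀ i ∈ s, 0 < i) : grow (shrink s) s.sum = s := by
  have hrep : s.filter (fun a => ¬ 1 < a)
      = Multiset.replicate (Multiset.card (s.filter (fun a => ¬ 1 < a))) 1 :=
    Multiset.eq_replicate_card.mpr (fun b hb => by
      have h1 := (Multiset.mem_filter.mp hb).2
      have h2 := h b (Multiset.mem_filter.mp hb).1
      omega)
  have hcards : Multiset.card (s.filter (1 < ·)) + Multiset.card (s.filter (fun a => ¬ 1 < a))
      = Multiset.card s := by
    rw [← Multiset.card_add, Multiset.filter_add_not]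
  have hcs := card_le_sum h
  have hc1 : Multiset.card (s.filter (1 < ·)) ≤ (s.filter (1 < ·)).sum :=
    card_le_sum (fun i hi => h i (Multiset.mem_filter.mp hi).1)
  have hfs : (s.filter (1 < ·)).sum + (s.filter (fun a => ¬ 1 < a)).sum = s.sum := by
    rw [← Multiset.sum_add, Multiset.filter_add_not]
  have hones : (s.filter (fun a => ¬ 1 < a)).sum
      = Multiset.card (s.filter (fun a => ¬ 1 < a)) := by
    conv_lhs => rw [hrep]
    simp
  rw [grow, shrink_eq, Multiset.map_map]
  rw [Multiset.map_congr rfl (fun x hx => by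
      have := (Multiset.mem_filter.mp hx).2
      show x - 1 + 1 = id x
      simp; omega)]
  rw [Multiset.map_id]
  have hcount : s.sum - (((s.filter (1 < ·)).map (· - 1)).sum
      + Multiset.card ((s.filter (1 < ·)).map (· - 1)))
      = Multiset.card (s.filter (fun a => ¬ 1 < a)) := by
    rw [Multiset.card_map, sum_map_sub_one (fun i hi => h i (Multiset.mem_filter.mp hi).1)]
    omega
  rw [hcount, ← hrep, Multiset.filter_add_not]

end Stmt5Aux

open Stmt5Aux

/-- For `l ≥ 2`, `d ≥ 1`, `Δ ≥ 1`, `m, n ≥ 2l - 3` and `d ≤ n`, the number of Brauer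
representation triples for the pair `(m, n - d)` of height `(m + n - l) + Δ` equals
`Σ_{k=0}^{⌊(l-d-Δ)/2⌋} Σ_{a=0}^{l-d-Δ-2k} p(a)·p(l-d-Δ-2k-a)` (when `Δ ≤ l - d`);
in particular this count is `0` when `Δ > l - d`. -/
theorem stmt5 (l d Δ m n : ℕ) (hl : 2 ≤ l) (hd1 : 1 ≤ d) (hΔ : 1 ≤ Δ)
    (hm : 2 * l - 3 ≤ m) (hn : 2 * l - 3 ≤ n) (hdn : d ≤ n) :
    (Δ ≤ l - d →
      Nat.card {γ : BRT m (n - d) // γ.ht = (m + n - l) + Δ}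
        = ∑ k ∈ Finset.range ((l - d - Δ) / 2 + 1),
            ∑ a ∈ Finset.range (l - d - Δ - 2 * k + 1),
              p a * p (l - d - Δ - 2 * k - a)) ∧
    (l - d < Δ →
      Nat.card {γ : BRT m (n - d) // γ.ht = (m + n - l) + Δ} = 0) := by
  constructor
  · intro hld
    have e1 : {γ : BRT m (n - d) // γ.ht = (m + n - l) + Δ} ≃
        {q : ℕ × Multiset ℕ × Multiset ℕ //
          (∀ i ∈ q.2.1, 0 < i) ∧ (∀ i ∈ q.2.2, 0 < i) ∧
          2 * q.1 + q.2.1.sum + q.2.2.sum = l - d - Δ} := by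
      refine ⟨fun γp => ⟨(γp.1.k, shrink γp.1.gp.parts, shrink γp.1.gm.parts), ?_⟩,
        fun qp => ⟨⟨qp.1.1, ?_, ⟨grow qp.1.2.1 (m - qp.1.1), fun hi => grow_pos hi, ?_⟩,
          ⟨grow qp.1.2.2 (n - d - qp.1.1), fun hi => grow_pos hi, ?_⟩⟩, ?_⟩, ?_, ?_⟩
      · obtain ⟨γ, hht⟩ := γp
        refine ⟨fun i hi => shrink_pos hi, fun i hi => shrink_pos hi, ?_⟩
        have h1 := γ.gp.parts_sum
        have h2 := γ.gm.parts_sum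
        have h3 := le_min_iff.mp γ.k_le
        have h4 := card_le_sum (fun i hi => γ.gp.parts_pos hi)
        have h5 := card_le_sum (fun i hi => γ.gm.parts_pos hi)
        have hht' : Multiset.card γ.gp.parts + Multiset.card γ.gm.parts = m + n - l + Δ := hht
        have hs1 : (shrink γ.gp.parts).sum = γ.gp.parts.sum - Multiset.card γ.gp.parts :=
          shrink_sum (fun i hi => γ.gp.parts_pos hi)
        have hs2 : (shrink γ.gm.parts).sum = γ.gm.parts.sum - Multiset.card γ.gm.parts :=
          shrink_sum (fun i hi => γ.gm.parts_pos hi)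
        simp only
        omega
      · -- k ≤ min m (n - d)
        obtain ⟨⟨k, u, v⟩, hu, hv, hq⟩ := qp
        have hu' : ∀ i ∈ u, 0 < i := hu
        have hv' : ∀ i ∈ v, 0 < i := hv
        have hq' : 2 * k + u.sum + v.sum = l - d - Δ := hq
        have hcu := card_le_sum hu'
        have hcv := card_le_sum hv'
        show k ≤ min m (n - d)
        apply le_min <;> omega
      · -- sum of grown gp
        obtain ⟨⟨k, u, v⟩, hu, hv, hq⟩ := qp
        have hu' : ∀ i ∈ u, 0 < i := hu
        have hv' : ∀ i ∈ v, 0 < i := hv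
        have hq' : 2 * k + u.sum + v.sum = l - d - Δ := hq
        have hcu := card_le_sum hu'
        have hcv := card_le_sum hv'
        show (grow u (m - k)).sum = m - k
        exact grow_sum (by omega)
      · -- sum of grown gm
        obtain ⟨⟨k, u, v⟩, hu, hv, hq⟩ := qp
        have hu' : ∀ i ∈ u, 0 < i := hu
        have hv' : ∀ i ∈ v, 0 < i := hv
        have hq' : 2 * k + u.sum + v.sum = l - d - Δ := hq
        have hcu := card_le_sum hu'
        have hcv := card_le_sum hv'
        show (grow v (n - d - k)).sum = n - d - k
        exact grow_sum (by omega)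
      · -- ht of constructed triple
        obtain ⟨⟨k, u, v⟩, hu, hv, hq⟩ := qp
        have hu' : ∀ i ∈ u, 0 < i := hu
        have hv' : ∀ i ∈ v, 0 < i := hv
        have hq' : 2 * k + u.sum + v.sum = l - d - Δ := hq
        have hcu := card_le_sum hu'
        have hcv := card_le_sum hv'
        show Multiset.card (grow u (m - k)) + Multiset.card (grow v (n - d - k)) = m + n - l + Δ
        rw [grow_card, grow_card]
        omega
      · -- left inverse
        rintro ⟨⟨k, hk, gp, gm⟩, hht⟩
        apply Subtype.ext
        have h1 : grow (shrink gp.parts) (m - k) = gp.parts := by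
          have := grow_shrink (fun i hi => gp.parts_pos hi)
          rwa [gp.parts_sum] at this
        have h2 : grow (shrink gm.parts) (n - d - k) = gm.parts := by
          have := grow_shrink (fun i hi => gm.parts_pos hi)
          rwa [gm.parts_sum] at this
        show BRT.mk k _ _ _ = BRT.mk k hk gp gm
        congr 1
        · exact Nat.Partition.ext h1
        · exact Nat.Partition.ext h2
      · -- right inverse
        rintro ⟨⟨k, u, v⟩, hu, hv, hq⟩
        apply Subtype.ext
        show (k, shrink (grow u (m - k)), shrink (grow v (n - d - k))) = (k, u, v)
        rw [shrink_grow u _ hu, shrink_grow v _ hv]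
    have e2 : {q : ℕ × Multiset ℕ × Multiset ℕ //
          (∀ i ∈ q.2.1, 0 < i) ∧ (∀ i ∈ q.2.2, 0 < i) ∧
          2 * q.1 + q.2.1.sum + q.2.2.sum = l - d - Δ} ≃
        Σ k : Fin ((l - d - Δ) / 2 + 1), Σ a : Fin (l - d - Δ - 2 * (k : ℕ) + 1),
          Nat.Partition (a : ℕ) × Nat.Partition (l - d - Δ - 2 * (k : ℕ) - (a : ℕ)) := by
      refine ⟨fun qp => ⟨⟨qp.1.1, ?_⟩, ⟨qp.1.2.1.sum, ?_⟩,
          ⟨qp.1.2.1, fun hi => qp.2.1 _ hi, rfl⟩,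
          ⟨qp.1.2.2, fun hi => qp.2.2.1 _ hi, ?_⟩⟩,
        fun x => ⟨((x.1 : ℕ), x.2.2.1.parts, x.2.2.2.parts),
          fun i hi => x.2.2.1.parts_pos hi, fun i hi => x.2.2.2.parts_pos hi, ?_⟩, ?_, ?_⟩
      · have := qp.2.2.2
        show qp.1.1 < (l - d - Δ) / 2 + 1
        omega
      · have := qp.2.2.2
        show qp.1.2.1.sum < l - d - Δ - 2 * qp.1.1 + 1
        omega
      · have hq' := qp.2.2.2
        show qp.1.2.2.sum = l - d - Δ - 2 * qp.1.1 - qp.1.2.1.sum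
        omega
      · have h1 : x.2.2.1.parts.sum = (x.2.1 : ℕ) := x.2.2.1.parts_sum
        have h2 : x.2.2.2.parts.sum = l - d - Δ - 2 * (x.1 : ℕ) - (x.2.1 : ℕ) :=
          x.2.2.2.parts_sum
        have h3 := x.1.isLt
        have h4 := x.2.1.isLt
        simp only
        omega
      · rintro ⟨⟨k, u, v⟩, hu, hv, hq⟩
        rfl
      · rintro ⟨⟨k, hk⟩, ⟨a, ha⟩, ⟨ps, hpos, hsum⟩, lam2⟩
        have h : ps.sum = a := hsum
        subst h
        rfl
    have hR : ∀ N : ℕ,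
        Fintype.card (Σ a : Fin (N + 1), Nat.Partition (a : ℕ) × Nat.Partition (N - (a : ℕ)))
          = ∑ a ∈ Finset.range (N + 1), p a * p (N - a) := by
      intro N
      rw [Fintype.card_sigma, ← Fin.sum_univ_eq_sum_range (fun a => p a * p (N - a)) (N + 1)]
      exact Finset.sum_congr rfl fun a _ => by rw [Fintype.card_prod]; rfl
    rw [Nat.card_congr (e1.trans e2), Nat.card_eq_fintype_card, Fintype.card_sigma,
      ← Fin.sum_univ_eq_sum_range
        (fun k => ∑ a ∈ Finset.range (l - d - Δ - 2 * k + 1), p a * p (l - d - Δ - 2 * k - a))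
        ((l - d - Δ) / 2 + 1)]
    exact Finset.sum_congr rfl fun k _ => hR (l - d - Δ - 2 * (k : ℕ))
  · intro hld
    have : IsEmpty {γ : BRT m (n - d) // γ.ht = (m + n - l) + Δ} := by
      constructor
      rintro ⟨γ, hht⟩
      have h1 := γ.gp.parts_sum
      have h2 := γ.gm.parts_sum
      have h3 := le_min_iff.mp γ.k_le
      have h4 := card_le_sum (fun i hi => γ.gp.parts_pos hi)
      have h5 := card_le_sum (fun i hi => γ.gm.parts_pos hi)
      have hht' : Multiset.card γ.gp.parts + Multiset.card γ.gm.parts = m + n - l + Δ := hht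
      omega
    exact Nat.card_of_isEmpty
end

section
/- Let l ≥ 2, let 1 ≤ d ≤ l − 1, let m, n ≥ 2l − 3, and set N = m + n − l. Define R(l,d) to be the number of Brauer representation triples γ for the pair (m, n−d) satisfying N < ht(γ) ≤ N + min(l−d, d). Then R(l,d) = Σ_{k=0}^{⌊(l−d)/2⌋} Σ_{Δ=1}^{min(l−d−2k, d)} Σ_{a=0}^{l−d−2k−Δ} p(a)·p(l−d−2k−Δ−a). -/
section Aux

lemma card_le_sum_aux (M : Multiset ℕ) (h : ∀ x ∈ M, 1 ≤ x) :
    Multiset.card M ≤ M.sum ∧ (M.map (· - 1)).sum = M.sum - Multiset.card M := by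
  induction M using Multiset.induction_on with
  | empty => simp
  | cons a M ih =>
    have ha := h a (Multiset.mem_cons_self ..)
    obtain ⟨h1, h2⟩ := ih (fun x hx => h x (Multiset.mem_cons_of_mem hx))
    simp only [Multiset.map_cons, Multiset.sum_cons, Multiset.card_cons]
    omega

lemma sum_map_succ_aux (M : Multiset ℕ) :
    (M.map (· + 1)).sum = M.sum + Multiset.card M := by
  induction M using Multiset.induction_on with
  | empty => simp
  | cons a M ih => simp only [Multiset.map_cons, Multiset.sum_cons, Multiset.card_cons]; omega

/-- Partitions of `s` with exactly `s - a` parts correspond to partitions of `a`,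
provided `2a ≤ s`. -/
def partEquiv (s a : ℕ) (h : a + a ≤ s) :
    {lam : Nat.Partition s // Multiset.card lam.parts = s - a} ≃ Nat.Partition a where
  toFun lam := by
    refine ⟨(lam.1.parts.filter (fun x => 2 ≤ x)).map (· - 1), ?_, ?_⟩
    · intro i hi
      obtain ⟨x, hx, rfl⟩ := Multiset.mem_map.mp hi
      have := (Multiset.mem_filter.mp hx).2
      omega
    · set M := lam.1.parts with hM
      have hpos : ∀ x ∈ M, 1 ≤ x := fun x hx => lam.1.parts_pos hx
      have hsum : M.sum = s := lam.1.parts_sum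
      have hcard : Multiset.card M = s - a := lam.2
      have hsplit := Multiset.filter_add_not (fun x => 2 ≤ x) M
      set F := Multiset.filter (fun x => 2 ≤ x) M with hF
      set O := Multiset.filter (fun x => ¬ 2 ≤ x) M with hO
      have hOrep : O = Multiset.replicate (Multiset.card O) 1 := by
        rw [Multiset.eq_replicate_card]
        intro b hb
        have hb2 := Multiset.mem_filter.mp hb
        have := hpos b hb2.1
        omega
      have hOsum : O.sum = Multiset.card O := by
        rw [hOrep]; simp [Multiset.sum_replicate]
      have hFpos : ∀ x ∈ F, 1 ≤ x := fun x hx => hpos x (Multiset.mem_of_mem_filter hx)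
      obtain ⟨hF1, hF2⟩ := card_le_sum_aux F hFpos
      have hsum2 : F.sum + O.sum = s := by rw [← Multiset.sum_add, hsplit, hsum]
      have hcard2 : Multiset.card F + Multiset.card O = s - a := by
        rw [← Multiset.card_add, hsplit, hcard]
      rw [hF2]
      omega
  invFun mu := by
    have hpos : ∀ x ∈ mu.parts, 1 ≤ x := fun x hx => mu.parts_pos hx
    have hc : Multiset.card mu.parts ≤ a := by
      have := (card_le_sum_aux mu.parts hpos).1
      rw [mu.parts_sum] at this; exact this
    refine ⟨⟨mu.parts.map (· + 1) + Multiset.replicate ((s - a) - Multiset.card mu.parts) 1,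
      ?_, ?_⟩, ?_⟩
    · intro i hi
      rcases Multiset.mem_add.mp hi with hi | hi
      · obtain ⟨x, _, rfl⟩ := Multiset.mem_map.mp hi
        omega
      · rw [Multiset.eq_of_mem_replicate hi]; norm_num
    · rw [Multiset.sum_add, sum_map_succ_aux, Multiset.sum_replicate, mu.parts_sum]
      simp only [smul_eq_mul, mul_one]
      omega
    · simp only [Multiset.card_add, Multiset.card_map, Multiset.card_replicate]
      omega
  left_inv := by
    rintro ⟨lam, hlam⟩
    apply Subtype.ext
    apply Nat.Partition.ext
    simp only
    set M := lam.parts with hM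
    have hpos : ∀ x ∈ M, 1 ≤ x := fun x hx => lam.parts_pos hx
    have hsplit := Multiset.filter_add_not (fun x => 2 ≤ x) M
    set F := Multiset.filter (fun x => 2 ≤ x) M with hF
    set O := Multiset.filter (fun x => ¬ 2 ≤ x) M with hO
    have hOrep : O = Multiset.replicate (Multiset.card O) 1 := by
      rw [Multiset.eq_replicate_card]
      intro b hb
      have hb2 := Multiset.mem_filter.mp hb
      have := hpos b hb2.1
      omega
    have hmapF : (F.map (· - 1)).map (· + 1) = F := by
      rw [Multiset.map_map]
      rw [show ((· + 1) ∘ (· - 1) : ℕ → ℕ) = fun x => x - 1 + 1 from rfl]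
      calc F.map (fun x => x - 1 + 1) = F.map id := by
            apply Multiset.map_congr rfl
            intro x hx
            have := (Multiset.mem_filter.mp hx).2
            simp only [id]
            omega
        _ = F := Multiset.map_id F
    have hcards : Multiset.card F + Multiset.card O = Multiset.card M := by
      rw [← Multiset.card_add, hsplit]
    show (F.map (· - 1)).map (· + 1)
        + Multiset.replicate ((s - a) - Multiset.card (F.map (· - 1))) 1 = M
    rw [hmapF, Multiset.card_map]
    have : (s - a) - Multiset.card F = Multiset.card O := by
      rw [← hlam]; omega
    rw [this, ← hOrep, hsplit]
  right_inv := by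
    rintro mu
    apply Nat.Partition.ext
    simp only
    rw [Multiset.filter_add]
    have h1 : Multiset.filter (fun x => 2 ≤ x) (mu.parts.map (· + 1)) = mu.parts.map (· + 1) := by
      rw [Multiset.filter_eq_self]
      intro b hb
      obtain ⟨x, hx, rfl⟩ := Multiset.mem_map.mp hb
      have := mu.parts_pos hx
      omega
    have h2 : Multiset.filter (fun x => 2 ≤ x)
        (Multiset.replicate ((s - a) - Multiset.card mu.parts) 1) = 0 := by
      rw [Multiset.filter_eq_nil]
      intro b hb
      rw [Multiset.eq_of_mem_replicate hb]
      omega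
    rw [h1, h2, add_zero, Multiset.map_map]
    calc (mu.parts.map ((· - 1) ∘ (· + 1))) = mu.parts.map id := by
          apply Multiset.map_congr rfl
          intro x _
          simp
      _ = mu.parts := Multiset.map_id _

lemma card_partition_subtype (s a : ℕ) (h : a + a ≤ s) :
    Fintype.card {lam : Nat.Partition s // Multiset.card lam.parts = s - a} = p a := by
  rw [p]; exact Fintype.card_congr (partEquiv s a h)

/-- `BRT m n` as a sigma type. -/
def brtEquiv (m n : ℕ) :
    BRT m n ≃ Σ k : Fin (min m n + 1), Nat.Partition (m - (k : ℕ)) × Nat.Partition (n - (k : ℕ)) where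
  toFun γ := ⟨⟨γ.k, Nat.lt_succ_of_le γ.k_le⟩, γ.gp, γ.gm⟩
  invFun x := ⟨(x.1 : ℕ), Nat.lt_succ_iff.mp x.1.2, x.2.1, x.2.2⟩
  left_inv _ := rfl
  right_inv _ := rfl

noncomputable instance (m n : ℕ) : Fintype (BRT m n) :=
  Fintype.ofEquiv _ (brtEquiv m n).symm

def sigmaSubtypeEquiv {ι : Type*} {β : ι → Type*} (P : ∀ i, β i → Prop) :
    {x : Σ i, β i // P x.1 x.2} ≃ Σ i, {y : β i // P i y} where
  toFun x := ⟨x.1.1, x.1.2, x.2⟩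
  invFun y := ⟨⟨y.1, y.2.1⟩, y.2.2⟩
  left_inv _ := rfl
  right_inv _ := rfl

set_option maxHeartbeats 2000000 in
lemma perk (l d m n k : ℕ) (hl : 2 ≤ l) (hd1 : 1 ≤ d) (hd2 : d ≤ l - 1)
    (hm : 2 * l - 3 ≤ m) (hn : 2 * l - 3 ≤ n) (hk : k ≤ min m (n - d)) :
    Fintype.card {c : Nat.Partition (m - k) × Nat.Partition (n - d - k) //
        m + n - l < Multiset.card c.1.parts + Multiset.card c.2.parts ∧
        Multiset.card c.1.parts + Multiset.card c.2.parts ≤ (m + n - l) + min (l - d) d}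
      = ∑ Δ ∈ Finset.Icc 1 (min (l - d - 2 * k) d),
          ∑ a ∈ Finset.range (l - d - 2 * k - Δ + 1),
            p a * p (l - d - 2 * k - Δ - a) := by
  classical
  have hcard1 : ∀ c : Nat.Partition (m - k) × Nat.Partition (n - d - k),
      Multiset.card c.1.parts ≤ m - k ∧ Multiset.card c.2.parts ≤ n - d - k := by
    intro c
    constructor
    · have := (card_le_sum_aux c.1.parts (fun x hx => c.1.parts_pos hx)).1
      rw [c.1.parts_sum] at this; exact this
    · have := (card_le_sum_aux c.2.parts (fun x hx => c.2.parts_pos hx)).1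
      rw [c.2.parts_sum] at this; exact this
  rw [Fintype.card_subtype]
  rw [Finset.card_eq_sum_card_fiberwise
    (f := fun c : Nat.Partition (m - k) × Nat.Partition (n - d - k) =>
      (⟨(l - d - 2 * k) - (((m - k) - Multiset.card c.1.parts)
          + ((n - d - k) - Multiset.card c.2.parts)),
        (m - k) - Multiset.card c.1.parts⟩ : Σ _ : ℕ, ℕ))
    (t := (Finset.Icc 1 (min (l - d - 2 * k) d)).sigma
      (fun Δ => Finset.range (l - d - 2 * k - Δ + 1)))
    (by
      intro c hc
      rw [Finset.mem_coe, Finset.mem_filter] at hc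
      obtain ⟨-, hlo, hhi⟩ := hc
      obtain ⟨h1, h2⟩ := hcard1 c
      simp only [Finset.mem_coe, Finset.mem_sigma, Finset.mem_Icc, Finset.mem_range]
      omega)]
  rw [Finset.sum_sigma]
  refine Finset.sum_congr rfl fun Δ hΔ => Finset.sum_congr rfl fun a ha => ?_
  rw [Finset.mem_Icc] at hΔ
  rw [Finset.mem_range] at ha
  rw [Finset.filter_filter, ← Fintype.card_subtype]
  have hiff : ∀ c : Nat.Partition (m - k) × Nat.Partition (n - d - k),
      ((m + n - l < Multiset.card c.1.parts + Multiset.card c.2.parts ∧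
        Multiset.card c.1.parts + Multiset.card c.2.parts ≤ (m + n - l) + min (l - d) d) ∧
       (⟨(l - d - 2 * k) - (((m - k) - Multiset.card c.1.parts)
            + ((n - d - k) - Multiset.card c.2.parts)),
         (m - k) - Multiset.card c.1.parts⟩ : Σ _ : ℕ, ℕ) = ⟨Δ, a⟩) ↔
      (Multiset.card c.1.parts = m - k - a
        ∧ Multiset.card c.2.parts = n - d - k - (l - d - 2 * k - Δ - a)) := by
    intro c
    obtain ⟨h1, h2⟩ := hcard1 c
    constructor
    · rintro ⟨⟨hlo, hhi⟩, hfe⟩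
      have e1 : (l - d - 2 * k) - (((m - k) - Multiset.card c.1.parts)
          + ((n - d - k) - Multiset.card c.2.parts)) = Δ := congrArg Sigma.fst hfe
      have e2 : (m - k) - Multiset.card c.1.parts = a := congrArg Sigma.snd hfe
      omega
    · rintro ⟨e1, e2⟩
      have g1 : (l - d - 2 * k) - (((m - k) - Multiset.card c.1.parts)
          + ((n - d - k) - Multiset.card c.2.parts)) = Δ := by omega
      have g2 : (m - k) - Multiset.card c.1.parts = a := by omega
      refine ⟨⟨by omega, by omega⟩, ?_⟩
      rw [g1, g2]
  rw [Fintype.card_congr ((Equiv.subtypeEquivRight hiff).trans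
    (Equiv.subtypeProdEquivProd
      (p := fun lam : Nat.Partition (m - k) => Multiset.card lam.parts = m - k - a)
      (q := fun mu : Nat.Partition (n - d - k) =>
        Multiset.card mu.parts = n - d - k - (l - d - 2 * k - Δ - a))))]
  rw [Fintype.card_prod]
  rw [card_partition_subtype (m - k) a (by omega),
      card_partition_subtype (n - d - k) (l - d - 2 * k - Δ - a) (by omega)]

/-- For `l ≥ 2`, `1 ≤ d ≤ l - 1`, `m, n ≥ 2l - 3` and `N = m + n - l`, the number
`R(l,d)` of Brauer representation triples `γ` for the pair `(m, n - d)` with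
`N < ht(γ) ≤ N + min (l-d) d` equals
`Σ_{k=0}^{⌊(l-d)/2⌋} Σ_{Δ=1}^{min(l-d-2k, d)} Σ_{a=0}^{l-d-2k-Δ} p(a)·p(l-d-2k-Δ-a)`. -/
theorem stmt6 (l d m n : ℕ) (hl : 2 ≤ l) (hd1 : 1 ≤ d) (hd2 : d ≤ l - 1)
    (hm : 2 * l - 3 ≤ m) (hn : 2 * l - 3 ≤ n) :
    Nat.card {γ : BRT m (n - d) //
        m + n - l < γ.ht ∧ γ.ht ≤ (m + n - l) + min (l - d) d}
      = ∑ k ∈ Finset.range ((l - d) / 2 + 1),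
          ∑ Δ ∈ Finset.Icc 1 (min (l - d - 2 * k) d),
            ∑ a ∈ Finset.range (l - d - 2 * k - Δ + 1),
              p a * p (l - d - 2 * k - Δ - a) := by
  classical
  rw [Nat.card_eq_fintype_card]
  have e1 : {γ : BRT m (n - d) //
        m + n - l < γ.ht ∧ γ.ht ≤ (m + n - l) + min (l - d) d} ≃
      Σ k : Fin (min m (n - d) + 1),
        {c : Nat.Partition (m - (k : ℕ)) × Nat.Partition (n - d - (k : ℕ)) //
          m + n - l < Multiset.card c.1.parts + Multiset.card c.2.parts ∧
          Multiset.card c.1.parts + Multiset.card c.2.parts ≤ (m + n - l) + min (l - d) d} := by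
    refine (Equiv.subtypeEquiv (brtEquiv m (n - d)) ?_).trans
      (sigmaSubtypeEquiv (fun (k : Fin (min m (n - d) + 1))
          (c : Nat.Partition (m - (k : ℕ)) × Nat.Partition (n - d - (k : ℕ))) =>
        m + n - l < Multiset.card c.1.parts + Multiset.card c.2.parts ∧
        Multiset.card c.1.parts + Multiset.card c.2.parts ≤ (m + n - l) + min (l - d) d))
    intro γ
    rfl
  rw [Fintype.card_congr e1, Fintype.card_sigma]
  have hstep : ∀ k : Fin (min m (n - d) + 1),
      Fintype.card {c : Nat.Partition (m - (k : ℕ)) × Nat.Partition (n - d - (k : ℕ)) //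
          m + n - l < Multiset.card c.1.parts + Multiset.card c.2.parts ∧
          Multiset.card c.1.parts + Multiset.card c.2.parts ≤ (m + n - l) + min (l - d) d}
      = ∑ Δ ∈ Finset.Icc 1 (min (l - d - 2 * (k : ℕ)) d),
          ∑ a ∈ Finset.range (l - d - 2 * (k : ℕ) - Δ + 1),
            p a * p (l - d - 2 * (k : ℕ) - Δ - a) := by
    intro k
    exact perk l d m n k hl hd1 hd2 hm hn (Nat.lt_succ_iff.mp k.2)
  rw [Finset.sum_congr rfl (fun k _ => hstep k)]
  rw [Fin.sum_univ_eq_sum_range (fun k =>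
      ∑ Δ ∈ Finset.Icc 1 (min (l - d - 2 * k) d),
        ∑ a ∈ Finset.range (l - d - 2 * k - Δ + 1),
          p a * p (l - d - 2 * k - Δ - a))]
  refine (Finset.sum_subset ?_ ?_).symm
  · intro k hk
    rw [Finset.mem_range] at hk ⊢
    omega
  · intro k _ hk
    rw [Finset.mem_range] at hk
    have : min (l - d - 2 * k) d = 0 := by omega
    rw [this]
    simp
end Aux
end

section
/- (Existence of the first red ancestor.) Let l ≥ 2, set N = m + n − l, and let γ = (k, γ₊, γ₋) be a Brauer representation triple for the pair (m,n) with ht(γ) ≤ N which possesses an N-excluded ancestor at some depth. Set t = N − ht(γ). Then k ≥ t + 1, and the triple γ̃ = (k − t − 1, γ̃₊, γ₋), where γ̃₊ is γ₊ with t+1 additional parts equal to 1 adjoined, is an N-excluded ancestor of γ at depth t + 1 with ht(γ̃) = N + 1; it is reached from γ by a chain of t+1 parent moves each of which adjoins one part equal to 1 to the first component partition. -/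
/-- A parent move which adjoins one part equal to `1` to the first component partition
(i.e. adds a box to the first column of `γ₊`), decreasing `k` by one and keeping `γ₋`. -/
def IsParentC {m n₁ n₂ : ℕ} (γ : BRT m n₁) (γ' : BRT m n₂) : Prop :=
  γ'.k = γ.k - 1 ∧ γ'.gm.parts = γ.gm.parts ∧ γ'.gp.parts = 1 ::ₘ γ.gp.parts

/-- `IsAncestorC m n d d' γ γ'` : `γ'` is reached from `γ` by a chain of `d' - d` parent
moves each of which adjoins one part equal to `1` to the first component partition. -/
inductive IsAncestorC (m n : ℕ) : ∀ (d d' : ℕ), BRT m (n - d) → BRT m (n - d') → Prop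
  | step {d : ℕ} (γ : BRT m (n - d)) (γ' : BRT m (n - (d + 1))) :
      IsParentC γ γ' → IsAncestorC m n d (d + 1) γ γ'
  | tail {d d' : ℕ} {γ : BRT m (n - d)} {γ' : BRT m (n - d')} (γ'' : BRT m (n - (d' + 1))) :
      IsAncestorC m n d d' γ γ' → IsParentC γ' γ'' → IsAncestorC m n d (d' + 1) γ γ''

lemma addBox_sum {lam mu : Multiset ℕ} (h : AddBox lam mu) : mu.sum = lam.sum + 1 := by
  rcases h with h | ⟨a, ha, h⟩
  · simp [h, add_comm]
  · subst h
    rw [Multiset.sum_cons]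
    have := Multiset.cons_erase ha
    have hs : lam.sum = a + (lam.erase a).sum := by
      conv_lhs => rw [← this]
      rw [Multiset.sum_cons]
    omega

lemma parent_invariant {m n₁ n₂ : ℕ} {γ : BRT m n₁} {γ' : BRT m n₂} (h : IsParent γ γ') :
    γ'.ht + γ'.k ≤ γ.ht + γ.k := by
  rcases h with ⟨hk, hgp, hab⟩ | ⟨hk, hgm, hab⟩
  · have hc := addBox_card hab
    simp only [BRT.ht, hgp, hk]
    omega
  · have hc := addBox_card hab
    have hs := addBox_sum hab
    have h1 := γ.gp.parts_sum
    have h2 := γ'.gp.parts_sum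
    have h3 := le_min_iff.mp γ.k_le
    have h4 := le_min_iff.mp γ'.k_le
    simp only [BRT.ht, hgm]
    omega

lemma anc_invariant {m n d d' : ℕ} {γ : BRT m (n - d)} {γ' : BRT m (n - d')}
    (h : IsAncestor m n d d' γ γ') : γ'.ht + γ'.k ≤ γ.ht + γ.k := by
  induction h with
  | step γ γ' hp => exact parent_invariant hp
  | tail γ'' h hp ih => exact le_trans (parent_invariant hp) ih

lemma ancC_anc {m n d d' : ℕ} {γ : BRT m (n - d)} {γ' : BRT m (n - d')}
    (h : IsAncestorC m n d d' γ γ') : IsAncestor m n d d' γ γ' := by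
  induction h with
  | step γ γ' hp => exact .step _ _ (Or.inr ⟨hp.1, hp.2.1, Or.inl hp.2.2⟩)
  | tail γ'' h hp ih => exact .tail _ ih (Or.inr ⟨hp.1, hp.2.1, Or.inl hp.2.2⟩)

lemma chainC (m n : ℕ) (γ : BRT m (n - 0)) (j : ℕ) (hj : j + 1 ≤ γ.k) :
    ∃ γt : BRT m (n - (j + 1)),
      γt.k = γ.k - (j + 1) ∧
      γt.gp.parts = Multiset.replicate (j + 1) 1 + γ.gp.parts ∧
      γt.gm.parts = γ.gm.parts ∧
      IsAncestorC m n 0 (j + 1) γ γt := by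
  have hkm : γ.k ≤ m := le_trans γ.k_le (min_le_left _ _)
  have hkn : γ.k ≤ n := by
    have := le_trans γ.k_le (min_le_right _ _)
    omega
  have hp1 := γ.gp.parts_sum
  have hm1 := γ.gm.parts_sum
  have hpos : ∀ i : ℕ, ∀ j : ℕ, i ∈ Multiset.replicate j 1 + γ.gp.parts → 0 < i := by
    intro i j hi
    rw [Multiset.mem_add] at hi
    rcases hi with hi | hi
    · rw [Multiset.eq_of_mem_replicate hi]; norm_num
    · exact γ.gp.parts_pos hi
  induction j with
  | zero =>
    have e1 : (Multiset.replicate (0 + 1) 1 + γ.gp.parts).sum = m - (γ.k - (0 + 1)) := by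
      rw [Multiset.sum_add, Multiset.sum_replicate]
      simp only [smul_eq_mul]
      omega
    have e2 : γ.gm.parts.sum = (n - (0 + 1)) - (γ.k - (0 + 1)) := by omega
    have hle : γ.k - (0 + 1) ≤ min m (n - (0 + 1)) := le_min_iff.mpr ⟨by omega, by omega⟩
    refine ⟨⟨γ.k - (0 + 1), hle, ⟨_, hpos _ _, e1⟩, ⟨γ.gm.parts, γ.gm.parts_pos, e2⟩⟩,
      rfl, rfl, rfl, ?_⟩
    exact .step γ _ ⟨rfl, rfl, by simp [Multiset.replicate_succ]⟩
  | succ j ih =>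
    obtain ⟨γj, hk, hgp, hgm, hanc⟩ := ih (by omega)
    clear ih
    have hknew : γ.k - (j + 2) = γj.k - 1 := by omega
    have e1 : (Multiset.replicate (j + 2) 1 + γ.gp.parts).sum = m - (γ.k - (j + 2)) := by
      rw [Multiset.sum_add, Multiset.sum_replicate]
      simp only [smul_eq_mul]
      omega
    have e2 : γ.gm.parts.sum = (n - (j + 1 + 1)) - (γ.k - (j + 2)) := by omega
    have hle : γ.k - (j + 2) ≤ min m (n - (j + 1 + 1)) := le_min_iff.mpr ⟨by omega, by omega⟩
    refine ⟨⟨γ.k - (j + 2), hle, ⟨_, hpos _ _, e1⟩, ⟨γ.gm.parts, γ.gm.parts_pos, e2⟩⟩,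
      rfl, rfl, rfl, ?_⟩
    refine .tail _ hanc ⟨hknew, hgm.symm, ?_⟩
    show Multiset.replicate (j + 2) 1 + γ.gp.parts = 1 ::ₘ γj.gp.parts
    rw [hgp, Multiset.replicate_succ, Multiset.cons_add]

/-- Existence of the first red ancestor: for `l ≥ 2`, `N = m + n - l`, if `γ` is a Brauer
representation triple for `(m,n)` with `ht(γ) ≤ N` possessing an `N`-excluded ancestor at
some depth, and `t = N - ht(γ)`, then `k ≥ t + 1` and the triple
`(k - t - 1, γ₊ ∪ 1^{t+1}, γ₋)` is an `N`-excluded ancestor of `γ` at depth `t + 1` of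
height `N + 1`, reached from `γ` by a chain of `t + 1` parent moves each adjoining one
part equal to `1` to the first component partition. -/
theorem stmt10 (m n l : ℕ) (hl : 2 ≤ l) (γ : BRT m (n - 0))
    (hg : γ.ht ≤ m + n - l)
    (hanc : ∃ d' : ℕ, ∃ γ' : BRT m (n - d'),
      IsAncestor m n 0 d' γ γ' ∧ m + n - l < γ'.ht) :
    ((m + n - l) - γ.ht) + 1 ≤ γ.k ∧
    ∃ γt : BRT m (n - (((m + n - l) - γ.ht) + 1)),
      γt.k = γ.k - (((m + n - l) - γ.ht) + 1) ∧
      γt.gp.parts = Multiset.replicate (((m + n - l) - γ.ht) + 1) 1 + γ.gp.parts ∧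
      γt.gm.parts = γ.gm.parts ∧
      γt.ht = (m + n - l) + 1 ∧
      IsAncestor m n 0 (((m + n - l) - γ.ht) + 1) γ γt ∧
      IsAncestorC m n 0 (((m + n - l) - γ.ht) + 1) γ γt := by
  obtain ⟨d', γ', hanc', hht⟩ := hanc
  have hinv := anc_invariant hanc'
  have hk : ((m + n - l) - γ.ht) + 1 ≤ γ.k := by omega
  obtain ⟨γt, h1, h2, h3, hC⟩ := chainC m n γ ((m + n - l) - γ.ht) hk
  refine ⟨hk, γt, h1, h2, h3, ?_, ancC_anc hC, hC⟩
  simp only [BRT.ht, h2, h3, Multiset.card_add, Multiset.card_replicate]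
  simp only [BRT.ht] at hg
  omega
end

section
/- (Minimality and uniqueness of the first red ancestor.) Let l ≥ 2, set N = m + n − l, and let γ = (k, γ₊, γ₋) be a Brauer representation triple for the pair (m,n) with ht(γ) ≤ N which possesses an N-excluded ancestor at some depth, and set t = N − ht(γ). Then every N-excluded ancestor of γ occurs at depth at least t + 1, and γ has exactly one N-excluded ancestor at depth t + 1, namely the triple (k − t − 1, γ̃₊, γ₋) where γ̃₊ is γ₊ with t+1 additional parts equal to 1 adjoined. -/
lemma addBox_card_eq {lam mu : Multiset ℕ} (h : AddBox lam mu)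
    (hc : Multiset.card mu = Multiset.card lam + 1) : mu = 1 ::ₘ lam := by
  rcases h with h | ⟨a, ha, h⟩
  · exact h
  · exfalso
    have h0 : 0 < Multiset.card lam := Multiset.card_pos_iff_exists_mem.2 ⟨a, ha⟩
    subst h
    simp [Multiset.card_erase_of_mem ha] at hc
    omega

lemma parent_facts {m n₁ n₂ : ℕ} {γ : BRT m n₁} {γ' : BRT m n₂} (h : IsParent γ γ') :
    γ'.ht ≤ γ.ht + 1 ∧ γ'.ht + γ'.k ≤ γ.ht + γ.k ∧
    (γ'.ht = γ.ht + 1 →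
      γ'.k + 1 = γ.k ∧ γ'.gp.parts = 1 ::ₘ γ.gp.parts ∧ γ'.gm.parts = γ.gm.parts) := by
  rcases h with ⟨hk, hgp, hab⟩ | ⟨hk, hgm, hab⟩
  · have hc := addBox_card hab
    have hht : γ'.ht ≤ γ.ht := by
      unfold BRT.ht; rw [hgp]; omega
    exact ⟨by omega, by omega, fun he => by omega⟩
  · have hc := addBox_card hab
    have hs := addBox_sum hab
    rw [γ.gp.parts_sum, γ'.gp.parts_sum] at hs
    have hkm : γ.k ≤ m := le_trans γ.k_le (min_le_left _ _)
    have hkk : γ'.k + 1 = γ.k := by omega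
    have hht : γ'.ht ≤ γ.ht + 1 ∧ γ.ht ≤ γ'.ht := by
      unfold BRT.ht; rw [hgm]; omega
    refine ⟨hht.1, by omega, fun he => ⟨hkk, ?_, hgm⟩⟩
    apply addBox_card_eq hab
    unfold BRT.ht at he; rw [hgm] at he; omega

lemma ancestor_facts {m n d d' : ℕ} {γ : BRT m (n - d)} {γ' : BRT m (n - d')}
    (h : IsAncestor m n d d' γ γ') :
    d < d' ∧ γ'.ht + d ≤ γ.ht + d' ∧ γ'.ht + γ'.k ≤ γ.ht + γ.k ∧
    (γ'.ht + d = γ.ht + d' →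
      γ'.k + (d' - d) = γ.k ∧
      γ'.gp.parts = Multiset.replicate (d' - d) 1 + γ.gp.parts ∧
      γ'.gm.parts = γ.gm.parts) := by
  induction h with
  | step γ γ' hp =>
    obtain ⟨h1, h2, h3⟩ := parent_facts hp
    refine ⟨by omega, by omega, by omega, fun he => ?_⟩
    obtain ⟨hk, hgp, hgm⟩ := h3 (by omega)
    refine ⟨by omega, ?_, hgm⟩
    rw [hgp, Nat.add_sub_cancel_left, Multiset.replicate_one, Multiset.singleton_add]
  | @tail dd' g g' g'' ha hp ih =>
    obtain ⟨i1, i2, i3, i4⟩ := ih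
    obtain ⟨h1, h2, h3⟩ := parent_facts hp
    refine ⟨by omega, by omega, by omega, fun he => ?_⟩
    obtain ⟨hk, hgp, hgm⟩ := h3 (by omega)
    obtain ⟨jk, jgp, jgm⟩ := i4 (by omega)
    refine ⟨by omega, ?_, by rw [hgm, jgm]⟩
    have hd : dd' + 1 - d = (dd' - d) + 1 := by omega
    rw [hgp, jgp, hd, Multiset.replicate_succ, Multiset.cons_add]

/-- The `j`-th triple in the canonical chain of b-steps from `γ`:
`(k - j, γ₊ ∪ 1^j, γ₋)`. -/
def chainT (m n : ℕ) (γ : BRT m (n - 0)) (j : ℕ) (hj : j ≤ γ.k) : BRT m (n - j) where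
  k := γ.k - j
  k_le := by
    have h1 := γ.k_le
    simp only [Nat.sub_zero, le_min_iff] at h1 ⊢
    omega
  gp := ⟨Multiset.replicate j 1 + γ.gp.parts, by
      intro i hi
      rcases Multiset.mem_add.mp hi with hi | hi
      · simp [Multiset.eq_of_mem_replicate hi]
      · exact γ.gp.parts_pos hi, by
      have hs := γ.gp.parts_sum
      have h1 := γ.k_le
      simp only [Nat.sub_zero, le_min_iff] at h1
      simp [Multiset.sum_replicate]
      omega⟩
  gm := ⟨γ.gm.parts, γ.gm.parts_pos, by
      have hs := γ.gm.parts_sum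
      have h1 := γ.k_le
      simp only [Nat.sub_zero, le_min_iff] at h1
      simp only [Nat.sub_zero] at hs
      omega⟩

lemma chain_parent_base (m n : ℕ) (γ : BRT m (n - 0)) (h1 : 1 ≤ γ.k) :
    IsParent γ (chainT m n γ 1 h1) := by
  refine Or.inr ⟨rfl, rfl, Or.inl ?_⟩
  show Multiset.replicate 1 1 + γ.gp.parts = 1 ::ₘ γ.gp.parts
  rw [Multiset.replicate_one, Multiset.singleton_add]

lemma chain_parent_step (m n : ℕ) (γ : BRT m (n - 0)) (j : ℕ) (hj : j + 1 ≤ γ.k) :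
    IsParent (chainT m n γ j (by omega)) (chainT m n γ (j + 1) hj) := by
  refine Or.inr ⟨by simp [chainT]; omega, rfl, Or.inl ?_⟩
  show Multiset.replicate (j + 1) 1 + γ.gp.parts = 1 ::ₘ (Multiset.replicate j 1 + γ.gp.parts)
  rw [Multiset.replicate_succ, Multiset.cons_add]

lemma chain_ancestor (m n : ℕ) (γ : BRT m (n - 0)) (j : ℕ) (hj : j + 1 ≤ γ.k) :
    IsAncestor m n 0 (j + 1) γ (chainT m n γ (j + 1) hj) := by
  induction j with
  | zero => exact .step γ _ (chain_parent_base m n γ hj)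
  | succ i ih =>
    exact .tail _ (ih (by omega)) (chain_parent_step m n γ (i + 1) hj)

lemma chain_ht (m n : ℕ) (γ : BRT m (n - 0)) (j : ℕ) (hj : j ≤ γ.k) :
    (chainT m n γ j hj).ht = j + γ.ht := by
  simp [chainT, BRT.ht]
  omega

/-- Minimality and uniqueness of the first red ancestor: for `l ≥ 2`, `N = m + n - l`, if
`γ` is a Brauer representation triple for `(m,n)` with `ht(γ) ≤ N` possessing an
`N`-excluded ancestor at some depth, and `t = N - ht(γ)`, then every `N`-excluded ancestor
of `γ` occurs at depth at least `t + 1`, and `γ` has exactly one `N`-excluded ancestor at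
depth `t + 1`, namely `(k - t - 1, γ₊ ∪ 1^{t+1}, γ₋)`. -/
theorem stmt11 (m n l : ℕ) (hl : 2 ≤ l) (γ : BRT m (n - 0))
    (hg : γ.ht ≤ m + n - l)
    (hanc : ∃ d' : ℕ, ∃ γ' : BRT m (n - d'),
      IsAncestor m n 0 d' γ γ' ∧ m + n - l < γ'.ht) :
    (∀ d' : ℕ, ∀ γ' : BRT m (n - d'),
        IsAncestor m n 0 d' γ γ' → m + n - l < γ'.ht →
        ((m + n - l) - γ.ht) + 1 ≤ d') ∧
    (∃ γ' : BRT m (n - (((m + n - l) - γ.ht) + 1)),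
        IsAncestor m n 0 (((m + n - l) - γ.ht) + 1) γ γ' ∧ m + n - l < γ'.ht) ∧
    (∀ γ' : BRT m (n - (((m + n - l) - γ.ht) + 1)),
        IsAncestor m n 0 (((m + n - l) - γ.ht) + 1) γ γ' → m + n - l < γ'.ht →
        γ'.k = γ.k - (((m + n - l) - γ.ht) + 1) ∧
        γ'.gp.parts = Multiset.replicate (((m + n - l) - γ.ht) + 1) 1 + γ.gp.parts ∧
        γ'.gm.parts = γ.gm.parts) := by
  set N := m + n - l with hN
  set t := N - γ.ht with ht_def
  -- γ.k is at least t + 1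
  have hk : t + 1 ≤ γ.k := by
    obtain ⟨d', γ', ha, hbig⟩ := hanc
    have := (ancestor_facts ha).2.2.1
    omega
  refine ⟨?_, ?_, ?_⟩
  · intro d' γ' ha hbig
    have := (ancestor_facts ha).2.1
    omega
  · refine ⟨chainT m n γ (t + 1) hk, chain_ancestor m n γ t hk, ?_⟩
    rw [chain_ht]
    omega
  · intro γ' ha hbig
    obtain ⟨h1, h2, h3, h4⟩ := ancestor_facts ha
    obtain ⟨hk', hgp, hgm⟩ := h4 (by omega)
    have hd : t + 1 - 0 = t + 1 := by omega
    rw [hd] at hk' hgp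
    exact ⟨by omega, hgp, hgm⟩
end

section
/- Let m ≥ 2l − 3 and let (k, γ₊, γ₋) be a Brauer representation triple for the pair (m, n−d) with ht = (m + n − l) + Δ for some Δ ≥ 1. Then c₁(γ₊) ≥ (|γ₊| − c₁(γ₊)) + 2d + 2k + 2Δ − 3, where c₁(γ₊) is the number of parts of γ₊ and |γ₊| its number of boxes. -/
/-- For `m ≥ 2l - 3`, if `(k, γ₊, γ₋)` is a Brauer representation triple for the pair
`(m, n - d)` of height `(m + n - l) + Δ` with `Δ ≥ 1`, then
`c₁(γ₊) ≥ (|γ₊| - c₁(γ₊)) + 2d + 2k + 2Δ - 3` (as integers). -/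
theorem stmt13 (m n l d Δ : ℕ) (hm : 2 * l - 3 ≤ m) (hd : d ≤ n) (hΔ : 1 ≤ Δ)
    (γ : BRT m (n - d)) (hht : γ.ht = (m + n - l) + Δ) :
    ((γ.gp.parts.sum : ℤ) - Multiset.card γ.gp.parts)
        + 2 * d + 2 * γ.k + 2 * Δ - 3
      ≤ (Multiset.card γ.gp.parts : ℤ) := by
  have h1 : γ.gp.parts.sum = m - γ.k := γ.gp.parts_sum
  have h2 : γ.gm.parts.sum = n - d - γ.k := γ.gm.parts_sum
  have hk := γ.k_le
  have h3 : Multiset.card γ.gm.parts ≤ γ.gm.parts.sum := by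
    simpa using Multiset.card_nsmul_le_sum (fun x hx => γ.gm.parts_pos hx)
  have h4 : Multiset.card γ.gp.parts + Multiset.card γ.gm.parts = (m + n - l) + Δ := hht
  omega
end
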